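/- In the LDA model, the centered second moment M_2 := E[x_1 ⊗ x_2] − (α_0/(α_0+1)) E[x_1] ⊗ E[x_1] decomposes as M_2 = ∑_{i=1}^k (α_i/(α_0(α_0+1))) μ_i ⊗ μ_i. -/
import Mathlib


open Finset

/-- In the LDA model, the centered second moment
`M₂ := E[x₁ ⊗ x₂] − (α₀/(α₀+1)) E[x₁] ⊗ E[x₁]` decomposes as
`M₂ = ∑ i, (α_i/(α₀(α₀+1))) μ_i ⊗ μ_i`.
Here `E[x₁] = ∑ i (α_i/α₀) μ_i` and
`E[x₁ ⊗ x₂] = ∑_{i,j} E[θ_i θ_j] μ_i ⊗ μ_j` with the Dirichlet second moment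
`E[θ_i θ_j] = (α_i α_j + 1_{i=j} α_i)/(α₀(α₀+1))`. -/
theorem lda_second_moment_decomposition {k d : ℕ}
    (α : Fin k → ℝ) (hα : ∀ i, 0 < α i) (α₀ : ℝ) (hα₀ : α₀ = ∑ i, α i)
    (μ : Fin k → Fin d → ℝ)
    (Ex1 : Fin d → ℝ) (hEx1 : ∀ a, Ex1 a = ∑ i, (α i / α₀) * μ i a)
    (Ex1x2 : Fin d → Fin d → ℝ)
    (hEx1x2 : ∀ a b, Ex1x2 a b = ∑ i, ∑ j,
      ((α i * α j + if i = j then α i else 0) / (α₀ * (α₀ + 1))) * (μ i a * μ j b)) :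
    ∀ a b, Ex1x2 a b - (α₀ / (α₀ + 1)) * (Ex1 a * Ex1 b)
      = ∑ i, (α i / (α₀ * (α₀ + 1))) * (μ i a * μ i b) := by
  intro a b
  rcases Nat.eq_zero_or_pos k with hk | hk
  · subst hk
    simp [hEx1, hEx1x2]
  · have hα₀pos : 0 < α₀ := by
      rw [hα₀]
      exact Finset.sum_pos (fun i _ => hα i) ⟨⟨0,hk⟩, Finset.mem_univ _⟩
    have h1 : α₀ ≠ 0 := ne_of_gt hα₀pos
    have h2 : α₀ + 1 ≠ 0 := by positivity
    rw [hEx1x2, hEx1, hEx1, Finset.sum_mul_sum, Finset.mul_sum]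
    rw [← Finset.sum_sub_distrib]
    have key : ∀ i : Fin k,
        (∑ j, ((α i * α j + if i = j then α i else 0) / (α₀ * (α₀ + 1))) * (μ i a * μ j b))
          - α₀ / (α₀ + 1) * (∑ j, α i / α₀ * μ i a * (α j / α₀ * μ j b))
        = (α i / (α₀ * (α₀ + 1))) * (μ i a * μ i b) := by
      intro i
      rw [Finset.mul_sum, ← Finset.sum_sub_distrib]
      have step : ∀ j : Fin k,
          ((α i * α j + if i = j then α i else 0) / (α₀ * (α₀ + 1))) * (μ i a * μ j b)
            - α₀ / (α₀ + 1) * (α i / α₀ * μ i a * (α j / α₀ * μ j b))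
          = if i = j then (α i / (α₀ * (α₀ + 1))) * (μ i a * μ j b) else 0 := by
        intro j
        by_cases h : i = j <;> simp only [h, if_pos, if_neg, if_true, if_false] <;>
          field_simp <;> ring
      rw [Finset.sum_congr rfl (fun j _ => step j)]
      simp
    rw [Finset.sum_congr rfl (fun i _ => key i)]
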